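/- Let K be a field of characteristic zero and let y = Q(x,y) = Σ_{i,j} a_{i,j} x^i y^j be a strongly reduced Henselian equation with Q ∈ K[x_1,x_1^{-1},...,x_r,x_r^{-1}][y]. Define ι_0 = (ι_{0,1},...,ι_{0,r}) by ι_{0,k} := max(0, −min{ i_k : a_{i,j} ≠ 0 }). Suppose M = (m_{i,j}) is a tuple of natural numbers with |M| = m, ‖M‖ = m − 1 and G(M) = n for some n ∈ ℤ^r, n >_grlex 0. Then m ≤ Σ_{k=1}^r λ_k n_k, where λ_r = ∏_{j=1}^{r−1}(1 + ι_{0,j}), λ_{r−1} = 1 + ∏_{j=1}^{r−1}(1 + ι_{0,j}), and for k < r−1, λ_k = ∏_{j=k+1}^{r−1}(1 + ι_{0,j}) + ∏_{j=1}^{r−1}(1 + ι_{0,j}). -/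
import Mathlib


/-- Lexicographic strict order on `ℤ^r`. -/
def finsuppLexLtZ {r : ℕ} (a b : Fin r →₀ ℤ) : Prop :=
  ∃ i : Fin r, (∀ j : Fin r, j < i → a j = b j) ∧ a i < b i

/-- Graded lexicographic strict order on `ℤ^r`. -/
def grlexLtZ {r : ℕ} (a b : Fin r →₀ ℤ) : Prop :=
  (∑ i, a i) < (∑ i, b i) ∨ ((∑ i, a i) = (∑ i, b i) ∧ finsuppLexLtZ a b)

private lemma telescope (g : ℕ → ℤ) :
    ∀ N a, a ≤ N →
      ∑ t ∈ Finset.Ico a N, g t * ∏ u ∈ Finset.Ico (t+1) N, (1 + g u)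
        = (∏ u ∈ Finset.Ico a N, (1 + g u)) - 1 := by
  intro N
  induction N with
  | zero => intro a ha; interval_cases a; simp
  | succ N ih =>
    intro a ha
    rcases Nat.lt_or_ge a (N+1) with h | h
    · have haN : a ≤ N := Nat.lt_succ_iff.mp h
      rw [Finset.sum_Ico_succ_top haN, Finset.prod_Ico_succ_top haN]
      have hc : ∀ t ∈ Finset.Ico a N, g t * ∏ u ∈ Finset.Ico (t+1) (N+1), (1+g u)
          = (g t * ∏ u ∈ Finset.Ico (t+1) N, (1+g u)) * (1 + g N) := by
        intro t ht
        rw [Finset.prod_Ico_succ_top (Finset.mem_Ico.mp ht).2]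
        ring
      rw [Finset.sum_congr rfl hc, ← Finset.sum_mul, ih a haN]
      simp [Finset.Ico_self]
      ring
    · have : a = N+1 := le_antisymm ha h
      subst this; simp

private lemma one_le_prod_aux (g : ℕ → ℤ) (hg : ∀ k, 0 ≤ g k) (s : Finset ℕ) :
    1 ≤ ∏ u ∈ s, (1 + g u) := by
  calc (1:ℤ) = ∏ u ∈ s, 1 := by simp
  _ ≤ ∏ u ∈ s, (1 + g u) :=
    Finset.prod_le_prod (fun i _ => by norm_num) (fun i _ => by linarith [hg i])

private lemma sum_lb (g x : ℕ → ℤ) (hg : ∀ k, 0 ≤ g k) (N a : ℕ) (ha : a ≤ N)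
    (hx : ∀ k, k < N → -(g k) ≤ x k) :
    1 - ∏ u ∈ Finset.Ico a N, (1 + g u)
      ≤ ∑ t ∈ Finset.Ico a N, (∏ u ∈ Finset.Ico (t+1) N, (1 + g u)) * x t := by
  have h1 : ∑ t ∈ Finset.Ico a N, (-(g t * ∏ u ∈ Finset.Ico (t+1) N, (1 + g u)))
      ≤ ∑ t ∈ Finset.Ico a N, (∏ u ∈ Finset.Ico (t+1) N, (1 + g u)) * x t := by
    apply Finset.sum_le_sum
    intro t ht
    have hS : (1:ℤ) ≤ ∏ u ∈ Finset.Ico (t+1) N, (1 + g u) := one_le_prod_aux g hg _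
    have hxt : -(g t) ≤ x t := hx t (Finset.mem_Ico.mp ht).2
    nlinarith
  rw [Finset.sum_neg_distrib, telescope g N a ha] at h1
  linarith

/-- The weight `λ_t` expressed over `ℕ`. -/
private def lamZ (r : ℕ) (g : ℕ → ℤ) (t : ℕ) : ℤ :=
  if t + 1 = r then ∏ u ∈ Finset.Ico 0 (r-1), (1 + g u)
  else (∏ u ∈ Finset.Ico (t+1) (r-1), (1 + g u)) + ∏ u ∈ Finset.Ico 0 (r-1), (1 + g u)

private lemma key_nat (r : ℕ) (g x : ℕ → ℤ) (hg : ∀ k, 0 ≤ g k)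
    (hx : ∀ k, k < r → -(g k) ≤ x k)
    (hpos : 0 < ∑ t ∈ Finset.range r, x t ∨
      (∑ t ∈ Finset.range r, x t = 0 ∧
        ∃ t0, t0 < r ∧ (∀ t, t < t0 → x t = 0) ∧ 0 < x t0)) :
    1 ≤ ∑ t ∈ Finset.range r, lamZ r g t * x t := by
  unfold lamZ
  obtain _ | N := r
  · simp at hpos
  have hNN : (N+1) - 1 = N := rfl
  rw [hNN]
  set P : ℤ := ∏ u ∈ Finset.Ico 0 N, (1 + g u) with hP
  rw [Finset.sum_range_succ]
  rw [if_pos rfl]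
  have hc : ∀ t ∈ Finset.range N,
      (if t + 1 = N+1 then P
       else (∏ u ∈ Finset.Ico (t+1) N, (1 + g u)) + P) * x t
      = (∏ u ∈ Finset.Ico (t+1) N, (1 + g u)) * x t + P * x t := by
    intro t ht
    rw [if_neg (by have := Finset.mem_range.mp ht; omega)]
    ring
  rw [Finset.sum_congr rfl hc, Finset.sum_add_distrib, ← Finset.mul_sum]
  have hP1 : (1:ℤ) ≤ P := one_le_prod_aux g hg _
  have hsum := Finset.sum_range_succ x N
  rcases hpos with hs | ⟨hs0, t0, ht0r, hzero, hxt0⟩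
  · have hlb := sum_lb g x hg N 0 (Nat.zero_le N) (fun k hk => hx k (by omega))
    rw [← Finset.range_eq_Ico] at hlb
    have hPr : P = ∏ u ∈ Finset.range N, (1 + g u) := by rw [hP, Finset.range_eq_Ico]
    rw [← hPr] at hlb
    have hstot : 1 ≤ ∑ t ∈ Finset.range N, x t + x N := by
      rw [← hsum]; exact hs
    have hPmul : P * 1 ≤ P * (∑ t ∈ Finset.range N, x t + x N) :=
      mul_le_mul_of_nonneg_left hstot (by linarith)
    have hexp : P * (∑ t ∈ Finset.range N, x t + x N)
        = P * ∑ t ∈ Finset.range N, x t + P * x N := by ring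
    linarith
  · have ht0N : t0 < N := by
      by_contra hcon
      have ht0 : t0 = N := by omega
      have h0 : ∑ t ∈ Finset.range N, x t = 0 :=
        Finset.sum_eq_zero (fun t ht => hzero t
          (by have := Finset.mem_range.mp ht; omega))
      rw [Finset.sum_range_succ, h0, zero_add] at hs0
      rw [ht0] at hxt0
      omega
    have hxN : P * x N = P * (- ∑ t ∈ Finset.range N, x t) := by
      rw [Finset.sum_range_succ] at hs0
      have : x N = - ∑ t ∈ Finset.range N, x t := by linarith
      rw [this]
    have hsplit : ∑ t ∈ Finset.range N, (∏ u ∈ Finset.Ico (t+1) N, (1 + g u)) * x t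
        = ∑ t ∈ Finset.Ico t0 N, (∏ u ∈ Finset.Ico (t+1) N, (1 + g u)) * x t := by
      rw [Finset.range_eq_Ico, ← Finset.sum_Ico_consecutive _ (Nat.zero_le t0) (le_of_lt ht0N)]
      have : ∑ t ∈ Finset.Ico 0 t0, (∏ u ∈ Finset.Ico (t+1) N, (1 + g u)) * x t = 0 :=
        Finset.sum_eq_zero (fun t ht => by
          rw [hzero t (Finset.mem_Ico.mp ht).2]; ring)
      rw [this, zero_add]
    have hsplit2 : ∑ t ∈ Finset.Ico t0 N, (∏ u ∈ Finset.Ico (t+1) N, (1 + g u)) * x t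
        = (∏ u ∈ Finset.Ico (t0+1) N, (1 + g u)) * x t0
          + ∑ t ∈ Finset.Ico (t0+1) N, (∏ u ∈ Finset.Ico (t+1) N, (1 + g u)) * x t := by
      rw [← Finset.sum_Ico_consecutive _ (Nat.le_succ t0) ht0N]
      congr 1
      rw [Finset.sum_Ico_succ_top (le_refl t0)]
      simp
    have hlb := sum_lb g x hg N (t0+1) ht0N (fun k hk => hx k (by omega))
    have hS1 : (1:ℤ) ≤ ∏ u ∈ Finset.Ico (t0+1) N, (1 + g u) := one_le_prod_aux g hg _
    rw [hsplit, hsplit2, hxN]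
    have hxzero : ∑ t ∈ Finset.range N, x t
        = x t0 + ∑ t ∈ Finset.Ico (t0+1) N, x t := by
      rw [Finset.range_eq_Ico, ← Finset.sum_Ico_consecutive _ (Nat.zero_le t0) (le_of_lt ht0N)]
      have h0 : ∑ t ∈ Finset.Ico 0 t0, x t = 0 :=
        Finset.sum_eq_zero (fun t ht => hzero t (Finset.mem_Ico.mp ht).2)
      rw [h0, zero_add, ← Finset.sum_Ico_consecutive _ (Nat.le_succ t0) ht0N]
      congr 1
      rw [Finset.sum_Ico_succ_top (le_refl t0)]
      simp
    nlinarith [hlb, hS1, hxt0]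

private lemma fin_filter_prod (r : ℕ) (f : ℕ → ℤ) (p : ℕ → Prop) [DecidablePred p] :
    ∏ u ∈ Finset.univ.filter (fun u : Fin r => p ↑u), f ↑u
      = ∏ u ∈ (Finset.range r).filter p, f u := by
  rw [Finset.prod_filter, Finset.prod_filter]
  exact Fin.prod_univ_eq_prod_range (fun u => if p u then f u else 1) r


/-- **The combinatorial bound in the generalized Flajolet–Soria formula.**
Let `y = Q(x,y) = Σ a_{i,j} x^i y^j` be a strongly reduced Henselian equation
(`Q ∈ K[x₁^{±1},…,x_r^{±1}][y]`, all exponents `i >_grlex 0`), and let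
`ι₀ = (ι_{0,1},…,ι_{0,r})` satisfy `i_k ≥ -ι_{0,k}` for all exponents `i` appearing
in `Q`.  Suppose `M = (m_{i,j})` is a tuple of natural numbers indexed by the monomials
of `Q` with `|M| = m ≥ 1`, `‖M‖ = m - 1` and `G(M) = n` for some `n >_grlex 0`.
Then `m ≤ Σ_{k=1}^{r} λ_k n_k`, where `λ_r = Π_{j=1}^{r-1}(1+ι_{0,j})`,
`λ_{r-1} = 1 + Π_{j=1}^{r-1}(1+ι_{0,j})`, and for `k < r-1`,
`λ_k = Π_{j=k+1}^{r-1}(1+ι_{0,j}) + Π_{j=1}^{r-1}(1+ι_{0,j})`.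
(Indices below are 0-based: coordinate `t : Fin r` corresponds to `k = t+1`.) -/
theorem flajolet_soria_bound (r : ℕ) (ι : Fin r → ℕ) (m : ℕ) (hm : 1 ≤ m)
    (M : ((Fin r →₀ ℤ) × ℕ) →₀ ℕ)
    (hpos : ∀ p ∈ M.support, grlexLtZ 0 p.1)
    (hι : ∀ p ∈ M.support, ∀ k : Fin r, -(ι k : ℤ) ≤ p.1 k)
    (hcard : (M.sum fun _ v => v) = m)
    (hnorm : (M.sum fun p v => v * p.2) = m - 1)
    (n : Fin r →₀ ℤ) (hn : grlexLtZ 0 n)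
    (hG : (M.sum fun p v => (v : ℤ) • p.1) = n) :
    (m : ℤ) ≤ ∑ t : Fin r,
      (if (t : ℕ) + 1 = r then
          ((∏ u ∈ Finset.univ.filter (fun u : Fin r => (u : ℕ) + 1 < r), (1 + ι u : ℤ)))
        else
          (∏ u ∈ Finset.univ.filter (fun u : Fin r => (t : ℕ) < (u : ℕ) ∧ (u : ℕ) + 1 < r),
              (1 + ι u : ℤ))
            + ∏ u ∈ Finset.univ.filter (fun u : Fin r => (u : ℕ) + 1 < r), (1 + ι u : ℤ))
        * n t := by
    classical
  set g : ℕ → ℤ := fun u => if h : u < r then (ι ⟨u, h⟩ : ℤ) else 0 with hgdef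
  have hg : ∀ k, 0 ≤ g k := by
    intro k; rw [hgdef]; dsimp only; split <;> positivity
  have hgval : ∀ u : Fin r, g ↑u = (ι u : ℤ) := by
    intro u; rw [hgdef]; dsimp only; rw [dif_pos u.isLt]
  set X : (Fin r →₀ ℤ) → ℕ → ℤ := fun f t => if h : t < r then f ⟨t, h⟩ else 0 with hXdef
  have hXval : ∀ (f : Fin r →₀ ℤ) (u : Fin r), X f ↑u = f u := by
    intro f u; rw [hXdef]; dsimp only; rw [dif_pos u.isLt]
  have hXsum : ∀ f : Fin r →₀ ℤ, ∑ i : Fin r, f i = ∑ t ∈ Finset.range r, X f t := by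
    intro f
    rw [← Fin.sum_univ_eq_sum_range (X f) r]
    exact Finset.sum_congr rfl (fun i _ => (hXval f i).symm)
  -- the product over a Fin-filter equals the corresponding Ico-product
  have hprodP : ∏ u ∈ Finset.univ.filter (fun u : Fin r => (u : ℕ) + 1 < r), (1 + ι u : ℤ)
      = ∏ u ∈ Finset.Ico 0 (r-1), (1 + g u) := by
    have e1 : ∏ u ∈ Finset.univ.filter (fun u : Fin r => (u : ℕ) + 1 < r), (1 + ι u : ℤ)
        = ∏ u ∈ Finset.univ.filter (fun u : Fin r => (u : ℕ) + 1 < r),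
            (fun v => 1 + g v) ↑u :=
      Finset.prod_congr rfl (fun u _ => by show (1 + (ι u : ℤ)) = 1 + g ↑u; rw [hgval u])
    rw [e1, fin_filter_prod r (fun v => 1 + g v) (fun v => v + 1 < r)]
    congr 1
    ext u; simp [Finset.mem_filter, Finset.mem_Ico]; omega
  have hprodS : ∀ t : Fin r,
      ∏ u ∈ Finset.univ.filter
          (fun u : Fin r => (t : ℕ) < (u : ℕ) ∧ (u : ℕ) + 1 < r), (1 + ι u : ℤ)
      = ∏ u ∈ Finset.Ico ((t : ℕ)+1) (r-1), (1 + g u) := by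
    intro t
    have e1 : ∏ u ∈ Finset.univ.filter
          (fun u : Fin r => (t : ℕ) < (u : ℕ) ∧ (u : ℕ) + 1 < r), (1 + ι u : ℤ)
        = ∏ u ∈ Finset.univ.filter
          (fun u : Fin r => (t : ℕ) < (u : ℕ) ∧ (u : ℕ) + 1 < r),
            (fun v => 1 + g v) ↑u :=
      Finset.prod_congr rfl (fun u _ => by show (1 + (ι u : ℤ)) = 1 + g ↑u; rw [hgval u])
    rw [e1, fin_filter_prod r (fun v => 1 + g v) (fun v => (t : ℕ) < v ∧ v + 1 < r)]
    congr 1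
    ext u; simp [Finset.mem_filter, Finset.mem_Ico]; omega
  -- rewrite the goal sum into ℕ-world
  have hgoal : (∑ t : Fin r,
      (if (t : ℕ) + 1 = r then
          ((∏ u ∈ Finset.univ.filter (fun u : Fin r => (u : ℕ) + 1 < r), (1 + ι u : ℤ)))
        else
          (∏ u ∈ Finset.univ.filter (fun u : Fin r => (t : ℕ) < (u : ℕ) ∧ (u : ℕ) + 1 < r),
              (1 + ι u : ℤ))
            + ∏ u ∈ Finset.univ.filter (fun u : Fin r => (u : ℕ) + 1 < r), (1 + ι u : ℤ))
        * n t)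
      = ∑ t ∈ Finset.range r, lamZ r g t * X n t := by
    rw [← Fin.sum_univ_eq_sum_range (fun t => lamZ r g t * X n t) r]
    apply Finset.sum_congr rfl
    intro t _
    rw [hXval n t]
    congr 1
    unfold lamZ
    by_cases hcase : (t : ℕ) + 1 = r
    · rw [if_pos hcase, if_pos hcase, hprodP]
    · rw [if_neg hcase, if_neg hcase, hprodP, hprodS t]
  rw [hgoal]
  -- evaluate X n pointwise through hG
  have hXn : ∀ t ∈ Finset.range r, X n t = ∑ p ∈ M.support, (M p : ℤ) * X p.1 t := by
    intro t ht
    have htr : t < r := Finset.mem_range.mp ht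
    rw [hXdef]; dsimp only
    rw [dif_pos htr, ← hG, Finsupp.sum, Finsupp.finset_sum_apply]
    apply Finset.sum_congr rfl
    intro p _
    rw [Finsupp.smul_apply, dif_pos htr]
    simp
  have hswap : ∑ t ∈ Finset.range r, lamZ r g t * X n t
      = ∑ p ∈ M.support, (M p : ℤ) * ∑ t ∈ Finset.range r, lamZ r g t * X p.1 t := by
    rw [Finset.sum_congr rfl (fun t ht => by rw [hXn t ht, Finset.mul_sum])]
    rw [Finset.sum_comm]
    apply Finset.sum_congr rfl
    intro p _
    rw [Finset.mul_sum]
    apply Finset.sum_congr rfl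
    intro t _
    ring
  rw [hswap]
  -- m as a sum over the support
  have hmcast : (m : ℤ) = ∑ p ∈ M.support, (M p : ℤ) := by
    rw [← hcard, Finsupp.sum]
    push_cast
    rfl
  rw [hmcast]
  apply Finset.sum_le_sum
  intro p hp
  have hkey : 1 ≤ ∑ t ∈ Finset.range r, lamZ r g t * X p.1 t := by
    apply key_nat r g (X p.1) hg
    · intro k hk
      rw [hXdef]; dsimp only
      rw [dif_pos hk]
      have := hι p hp ⟨k, hk⟩
      have hgk : g k = (ι ⟨k, hk⟩ : ℤ) := by rw [hgdef]; dsimp only; rw [dif_pos hk]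
      rw [hgk]
      exact this
    · have h0sum : ∑ i : Fin r, (0 : Fin r →₀ ℤ) i = 0 := by simp
      rcases hpos p hp with h | ⟨heq, i, hji, hlt⟩
      · left
        rw [← hXsum p.1]
        rw [h0sum] at h
        exact h
      · right
        constructor
        · rw [← hXsum p.1, ← heq, h0sum]
        · refine ⟨(i : ℕ), i.isLt, ?_, ?_⟩
          · intro t htlt
            have htr : t < r := lt_trans htlt i.isLt
            rw [hXdef]; dsimp only
            rw [dif_pos htr]
            have : (⟨t, htr⟩ : Fin r) < i := by rw [Fin.lt_def]; exact htlt
            have h0 := hji ⟨t, htr⟩ this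
            simpa using h0.symm
          · rw [hXval p.1 i]
            simpa using hlt
  have hnn : (0 : ℤ) ≤ (M p : ℤ) := Int.natCast_nonneg _
  calc (M p : ℤ) = (M p : ℤ) * 1 := by ring
  _ ≤ (M p : ℤ) * ∑ t ∈ Finset.range r, lamZ r g t * X p.1 t :=
    mul_le_mul_of_nonneg_left hkey hnn
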